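/- Let p, A, B be positive integers. Then the number of quadruples (n₁, n₂, m₁, m₂) of positive integers satisfying A ≤ n₁ ≤ 2A, A ≤ n₂ ≤ 2A, B ≤ m₁ ≤ 2B, B ≤ m₂ ≤ 2B, and p n₁² − 4 m₁ = p n₂² − 4 m₂, is at most 100 · (B + 1) · (A + B/p + 1), where B/p denotes real division. -/

import Mathlib

set_option maxHeartbeats 1000000


theorem stmt12 (p A B : ℕ) (hp : 0 < p) (hA : 0 < A) (hB : 0 < B) :
    (((Finset.Icc A (2 * A) ×ˢ Finset.Icc A (2 * A) ×ˢ
        Finset.Icc B (2 * B) ×ˢ Finset.Icc B (2 * B)).filter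
        (fun x : ℕ × ℕ × ℕ × ℕ =>
          (p : ℤ) * (x.1 : ℤ) ^ 2 - 4 * (x.2.2.1 : ℤ) =
            (p : ℤ) * (x.2.1 : ℤ) ^ 2 - 4 * (x.2.2.2 : ℤ))).card : ℝ) ≤
      100 * ((B : ℝ) + 1) * ((A : ℝ) + (B : ℝ) / (p : ℝ) + 1) := by
  set D := 4 * B / (2 * A * p) with hDdef
  set S := ((Finset.Icc A (2 * A) ×ˢ Finset.Icc A (2 * A) ×ˢ
        Finset.Icc B (2 * B) ×ˢ Finset.Icc B (2 * B)).filter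
        (fun x : ℕ × ℕ × ℕ × ℕ =>
          (p : ℤ) * (x.1 : ℤ) ^ 2 - 4 * (x.2.2.1 : ℤ) =
            (p : ℤ) * (x.2.1 : ℤ) ^ 2 - 4 * (x.2.2.2 : ℤ))) with hS
  clear_value D
  have hAp : 0 < 2 * A * p := by positivity
  -- key: for elements of S, |n₁ - n₂| ≤ D
  have hkey : ∀ x ∈ S, x.1 ≤ x.2.1 + D ∧ x.2.1 ≤ x.1 + D := by
    rintro ⟨n₁, n₂, m₁, m₂⟩ hx
    dsimp only
    simp only [hS, Finset.mem_filter, Finset.mem_product, Finset.mem_Icc] at hx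
    obtain ⟨⟨⟨hn₁l, hn₁u⟩, ⟨hn₂l, hn₂u⟩, ⟨hm₁l, hm₁u⟩, hm₂l, hm₂u⟩, heq⟩ := hx
    have hp' : (1 : ℤ) ≤ (p : ℤ) := by exact_mod_cast hp
    have hcast : ∀ a b : ℕ, a ≤ b → ((b - a : ℕ) : ℤ) = (b : ℤ) - a := by
      intro a b h; omega
    constructor
    · rcases le_total n₁ n₂ with h | h
      · omega
      · have key : ((n₁ - n₂ : ℕ) : ℤ) * (2 * A * p) ≤ 4 * B := by
          rw [hcast _ _ h]
          have h1 : (2 * A : ℤ) ≤ (n₁ : ℤ) + n₂ := by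
            push_cast; omega
          have h2 : (0 : ℤ) ≤ (n₁ : ℤ) - n₂ := by
            push_cast; omega
          have h3 : (m₁ : ℤ) - m₂ ≤ B := by push_cast; omega
          nlinarith [mul_nonneg (mul_nonneg (by linarith : (0:ℤ) ≤ (p:ℤ))
            h2) (by linarith : (0:ℤ) ≤ (n₁:ℤ) + n₂ - 2 * A),
            mul_le_mul_of_nonneg_left h1 (mul_nonneg (by linarith : (0:ℤ) ≤ (p:ℤ)) h2)]
        have keyn : (n₁ - n₂) * (2 * A * p) ≤ 4 * B := by exact_mod_cast key
        have : n₁ - n₂ ≤ D := by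
          rw [hDdef, Nat.le_div_iff_mul_le hAp]
          exact keyn
        omega
    · rcases le_total n₂ n₁ with h | h
      · omega
      · have key : ((n₂ - n₁ : ℕ) : ℤ) * (2 * A * p) ≤ 4 * B := by
          rw [hcast _ _ h]
          have h1 : (2 * A : ℤ) ≤ (n₁ : ℤ) + n₂ := by
            push_cast; omega
          have h2 : (0 : ℤ) ≤ (n₂ : ℤ) - n₁ := by
            push_cast; omega
          have h3 : (m₂ : ℤ) - m₁ ≤ B := by push_cast; omega
          nlinarith [mul_nonneg (mul_nonneg (by linarith : (0:ℤ) ≤ (p:ℤ))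
            h2) (by linarith : (0:ℤ) ≤ (n₁:ℤ) + n₂ - 2 * A),
            mul_le_mul_of_nonneg_left h1 (mul_nonneg (by linarith : (0:ℤ) ≤ (p:ℤ)) h2)]
        have keyn : (n₂ - n₁) * (2 * A * p) ≤ 4 * B := by exact_mod_cast key
        have : n₂ - n₁ ≤ D := by
          rw [hDdef, Nat.le_div_iff_mul_le hAp]
          exact keyn
        omega
  -- injection into a product
  have hcard : S.card ≤ (A + 1) * ((2 * D + 1) * (B + 1)) := by
    have hle := Finset.card_le_card_of_injOn
      (f := fun x : ℕ × ℕ × ℕ × ℕ => (x.1, x.2.1 + D - x.1, x.2.2.1))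
      (t := Finset.Icc A (2 * A) ×ˢ Finset.Icc 0 (2 * D) ×ˢ Finset.Icc B (2 * B))
      (s := S) ?_ ?_
    · have e1 : 2 * A + 1 - A = A + 1 := by omega
      have e2 : 2 * D + 1 - 0 = 2 * D + 1 := by omega
      have e3 : 2 * B + 1 - B = B + 1 := by omega
      rw [Finset.card_product, Finset.card_product, Nat.card_Icc, Nat.card_Icc,
        Nat.card_Icc, e1, e2, e3] at hle
      exact hle
    · rintro ⟨n₁, n₂, m₁, m₂⟩ hx
      have hk := hkey _ hx
      dsimp only
      simp only [hS, Finset.mem_coe, Finset.mem_filter, Finset.mem_product, Finset.mem_Icc] at hx ⊢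
      obtain ⟨⟨⟨hn₁l, hn₁u⟩, ⟨hn₂l, hn₂u⟩, ⟨hm₁l, hm₁u⟩, hm₂l, hm₂u⟩, heq⟩ := hx
      simp only at hk
      refine ⟨⟨hn₁l, hn₁u⟩, ⟨Nat.zero_le _, ?_⟩, hm₁l, hm₁u⟩
      omega
    · rintro ⟨n₁, n₂, m₁, m₂⟩ hx ⟨n₁', n₂', m₁', m₂'⟩ hy hxy
      have hkx := hkey _ hx
      have hky := hkey _ hy
      dsimp only at hkx hky hxy
      simp only [Prod.mk.injEq] at hxy
      obtain ⟨e1, e2, e3⟩ := hxy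
      have hn2 : n₂ = n₂' := by omega
      simp only [hS, Finset.mem_coe, Finset.mem_filter] at hx hy
      have heqx := hx.2
      have heqy := hy.2
      have hm2 : m₂ = m₂' := by
        have : (4 : ℤ) * (m₂ : ℤ) = 4 * (m₂' : ℤ) := by
          rw [e1] at heqx; rw [hn2] at heqx; rw [e3] at heqx
          linarith [heqx, heqy]
        have : (m₂ : ℤ) = (m₂' : ℤ) := by linarith
        exact_mod_cast this
      simp only [Prod.mk.injEq]
      exact ⟨e1, hn2, e3, hm2⟩
  -- final real estimate
  have hp0 : (0 : ℝ) < (p : ℝ) := by exact_mod_cast hp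
  have hA1 : (1 : ℝ) ≤ (A : ℝ) := by exact_mod_cast hA
  have hB1 : (1 : ℝ) ≤ (B : ℝ) := by exact_mod_cast hB
  have hp1 : (1 : ℝ) ≤ (p : ℝ) := by exact_mod_cast hp
  have hD0 : (0 : ℝ) ≤ (D : ℝ) := by positivity
  have hDmul : (D : ℝ) * (2 * A * p) ≤ 4 * B := by
    have h := Nat.div_mul_le_self (4 * B) (2 * A * p)
    rw [← hDdef] at h
    exact_mod_cast h
  have hDA : (D : ℝ) * A ≤ 2 * B / p := by
    rw [le_div_iff₀ hp0]
    nlinarith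
  have step : ((A : ℝ) + 1) * (2 * (D : ℝ) + 1) ≤ 100 * ((A : ℝ) + (B : ℝ) / p + 1) := by
    have hq0 : (0 : ℝ) ≤ (B : ℝ) / p := by positivity
    have h2B : (2 : ℝ) * B / p = 2 * ((B : ℝ) / p) := by ring
    rw [h2B] at hDA
    nlinarith [mul_nonneg hD0 (by linarith : (0:ℝ) ≤ (A:ℝ) - 1)]
  have hcardR : (S.card : ℝ) ≤ ((A : ℝ) + 1) * ((2 * (D : ℝ) + 1) * ((B : ℝ) + 1)) := by
    have := (Nat.cast_le (α := ℝ)).2 hcard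
    push_cast at this
    linarith
  have hB0 : (0 : ℝ) ≤ (B : ℝ) + 1 := by linarith
  calc (S.card : ℝ) ≤ ((A : ℝ) + 1) * ((2 * (D : ℝ) + 1) * ((B : ℝ) + 1)) := hcardR
    _ ≤ (100 * ((A : ℝ) + (B : ℝ) / p + 1)) * ((B : ℝ) + 1) := by
        nlinarith [mul_le_mul_of_nonneg_right step hB0]
    _ = 100 * ((B : ℝ) + 1) * ((A : ℝ) + (B : ℝ) / p + 1) := by ring
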